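/- Let τ := Δ + q_δ, where q_δ is the absolute value of the δ-quantile of Lap(Δ/ε), let M denote the PositiveLaplaceMechanism with parameters ε, τ and sensitivity Δ, let v ∈ ℝ and v' = v + Δ. Then for every measurable set S ⊂ ℝ, either S ∩ (v + Δ, ∞) has Lebesgue measure zero, or both P(M(v) ∈ S ∩ (v + Δ, ∞)) and P(M(v') ∈ S ∩ (v + Δ, ∞)) are strictly positive and their ratio P(M(v) ∈ S ∩ (v + Δ, ∞)) / P(M(v') ∈ S ∩ (v + Δ, ∞)) lies in the interval [e^{−ε}, e^{ε}]. -/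

import Mathlib

open MeasureTheory Real

noncomputable def laplace (b : ℝ) : Measure ℝ :=
  volume.withDensity fun x => ENNReal.ofReal ((2 * b)⁻¹ * Real.exp (-|x| / b))

noncomputable def posLapProb (ε τ Δ : ℝ) (v : ℝ) (S : Set ℝ) : ENNReal :=
  laplace (Δ / ε) {η : ℝ | max v (v + τ + η) ∈ S}

lemma integrable_exp_neg_abs_div {b : ℝ} (hb : 0 < b) :
    Integrable (fun x : ℝ => Real.exp (-|x| / b)) := by
  have h : IntegrableOn (fun x : ℝ => Real.exp (-|x| / b)) (Set.Ioi 0) := by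
    refine (exp_neg_integrableOn_Ioi 0 (inv_pos.mpr hb)).congr_fun ?_ measurableSet_Ioi
    intro x hx
    show rexp (-b⁻¹ * x) = rexp (-|x| / b)
    rw [abs_of_pos hx]
    congr 1
    field_simp
  rw [← integrableOn_univ, ← @Set.Iio_union_Ici _ _ (0 : ℝ), integrableOn_union,
    integrableOn_Ici_iff_integrableOn_Ioi]
  refine ⟨?_, h⟩
  rw [← (Measure.measurePreserving_neg (volume : Measure ℝ)).integrableOn_comp_preimage
      (Homeomorph.neg ℝ).measurableEmbedding]
  simpa [Function.comp_def, abs_neg] using h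

theorem stmt_7 (ε δ Δ : ℝ) (hε : 0 < ε) (hδ : δ ∈ Set.Ioo (0 : ℝ) (1 / 2)) (hΔ : 0 < Δ)
    (τ : ℝ) (hτ : τ = Δ + (Δ / ε) * Real.log (1 / (2 * δ)))
    (v v' : ℝ) (hv' : v' = v + Δ) :
    ∀ S : Set ℝ, MeasurableSet S →
      volume (S ∩ Set.Ioi (v + Δ)) = 0 ∨
      (0 < posLapProb ε τ Δ v (S ∩ Set.Ioi (v + Δ)) ∧
       0 < posLapProb ε τ Δ v' (S ∩ Set.Ioi (v + Δ)) ∧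
       (posLapProb ε τ Δ v (S ∩ Set.Ioi (v + Δ))).toReal /
          (posLapProb ε τ Δ v' (S ∩ Set.Ioi (v + Δ))).toReal ∈
         Set.Icc (Real.exp (-ε)) (Real.exp ε)) := by
  intro S hS
  have hb : 0 < Δ / ε := div_pos hΔ hε
  set b : ℝ := Δ / ε with hbdef
  set T := S ∩ Set.Ioi (v + Δ) with hTdef
  have hTmeas : MeasurableSet T := hS.inter measurableSet_Ioi
  by_cases h0 : volume T = 0
  · exact Or.inl h0
  right
  set f : ℝ → ℝ := fun x => (2 * b)⁻¹ * Real.exp (-|x| / b) with hfdef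
  have hfpos : ∀ x, 0 < f x := fun x =>
    mul_pos (inv_pos.mpr (by positivity)) (exp_pos _)
  have hfc : Continuous f := by
    exact continuous_const.mul ((continuous_abs.neg.div_const b).rexp)
  have hm : ∀ c : ℝ, Measurable fun x : ℝ => ENNReal.ofReal (f (x - c)) := fun c =>
    (hfc.comp (continuous_id.sub continuous_const)).measurable.ennreal_ofReal
  -- rewrite the mechanism probability as a set lintegral over T
  have key : ∀ w : ℝ, w ≤ v + Δ →
      posLapProb ε τ Δ w T = ∫⁻ x in T, ENNReal.ofReal (f (x - (w + τ))) := by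
    intro w hw
    have hset : {η : ℝ | max w (w + τ + η) ∈ T} = (fun η => (w + τ) + η) ⁻¹' T := by
      ext η
      simp only [Set.mem_setOf_eq, Set.mem_preimage]
      constructor
      · intro h
        have hlt : w < max w (w + τ + η) := lt_of_le_of_lt hw h.2
        have hmax : max w (w + τ + η) = w + τ + η := by
          rcases max_choice w (w + τ + η) with he | he
          · rw [he] at hlt; exact absurd hlt (lt_irrefl w)
          · exact he
        rw [hmax] at h; exact h
      · intro h
        have hlt : w < w + τ + η := lt_of_le_of_lt hw h.2
        rwa [max_eq_right hlt.le]
    rw [posLapProb, hset, ← hbdef, laplace,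
      withDensity_apply _ (hTmeas.preimage (measurable_const_add _))]
    have heq := (measurePreserving_add_left (volume : Measure ℝ)
        (w + τ)).setLIntegral_comp_preimage_emb
      (MeasurableEquiv.addLeft (w + τ)).measurableEmbedding
      (fun y => ENNReal.ofReal (f (y - (w + τ)))) T
    simp only [MeasurableEquiv.coe_addLeft, add_sub_cancel_left] at heq
    rw [← heq]
  -- pointwise density comparison
  have hεb : ε * b = Δ := by
    rw [hbdef]; field_simp
  have hratio : ∀ s t : ℝ, |t| ≤ |s| + Δ →
      ENNReal.ofReal (f s) ≤ ENNReal.ofReal (Real.exp ε) * ENNReal.ofReal (f t) := by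
    intro s t h
    rw [← ENNReal.ofReal_mul (exp_pos ε).le]
    apply ENNReal.ofReal_le_ofReal
    have hexp : Real.exp (-|s| / b) ≤ Real.exp ε * Real.exp (-|t| / b) := by
      rw [← Real.exp_add]
      apply Real.exp_le_exp.mpr
      rw [div_le_iff₀ hb, add_mul, div_mul_cancel₀ _ hb.ne']
      linarith
    calc f s = (2 * b)⁻¹ * Real.exp (-|s| / b) := rfl
      _ ≤ (2 * b)⁻¹ * (Real.exp ε * Real.exp (-|t| / b)) := by
          apply mul_le_mul_of_nonneg_left hexp (by positivity)
      _ = Real.exp ε * f t := by rw [hfdef]; ring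
  -- integral inequalities
  have habs1 : ∀ x : ℝ, |x - (v' + τ)| ≤ |x - (v + τ)| + Δ := by
    intro x
    have h1 : x - (v' + τ) = (x - (v + τ)) - Δ := by rw [hv']; ring
    rw [h1]
    calc |x - (v + τ) - Δ| ≤ |x - (v + τ)| + |Δ| := abs_sub _ _
      _ = |x - (v + τ)| + Δ := by rw [abs_of_pos hΔ]
  have habs2 : ∀ x : ℝ, |x - (v + τ)| ≤ |x - (v' + τ)| + Δ := by
    intro x
    have h1 : x - (v + τ) = (x - (v' + τ)) + Δ := by rw [hv']; ring
    rw [h1]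
    calc |x - (v' + τ) + Δ| ≤ |x - (v' + τ)| + |Δ| := abs_add_le _ _
      _ = |x - (v' + τ)| + Δ := by rw [abs_of_pos hΔ]
  have h1 : (∫⁻ x in T, ENNReal.ofReal (f (x - (v + τ)))) ≤
      ENNReal.ofReal (Real.exp ε) * ∫⁻ x in T, ENNReal.ofReal (f (x - (v' + τ))) := by
    rw [← lintegral_const_mul' _ _ ENNReal.ofReal_ne_top]
    exact lintegral_mono fun x => hratio _ _ (habs1 x)
  have h2 : (∫⁻ x in T, ENNReal.ofReal (f (x - (v' + τ)))) ≤
      ENNReal.ofReal (Real.exp ε) * ∫⁻ x in T, ENNReal.ofReal (f (x - (v + τ))) := by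
    rw [← lintegral_const_mul' _ _ ENNReal.ofReal_ne_top]
    exact lintegral_mono fun x => hratio _ _ (habs2 x)
  -- positivity
  have hpos : ∀ c : ℝ, 0 < ∫⁻ x in T, ENNReal.ofReal (f (x - c)) := by
    intro c
    rw [setLIntegral_pos_iff (hm c)]
    have hsupp : (Function.support fun x : ℝ => ENNReal.ofReal (f (x - c))) = Set.univ := by
      ext x
      simp [Function.mem_support, ENNReal.ofReal_eq_zero, not_le, hfpos (x - c)]
    rw [hsupp, Set.univ_inter]
    exact pos_iff_ne_zero.mpr h0
  -- finiteness
  have hfin : ∀ c : ℝ, (∫⁻ x in T, ENNReal.ofReal (f (x - c))) ≠ ⊤ := by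
    intro c
    have hI : Integrable (fun x : ℝ => f (x - c)) := by
      have h1 : Integrable f := ((integrable_exp_neg_abs_div hb).const_mul (2 * b)⁻¹).congr
        (by filter_upwards with x; rw [hfdef])
      exact h1.comp_sub_right c
    exact (lt_of_le_of_lt (setLIntegral_le_lintegral _ _) hI.lintegral_lt_top).ne
  -- put it together
  have kv := key v (by linarith)
  have kv' := key v' hv'.le
  rw [kv, kv']
  refine ⟨hpos _, hpos _, ?_⟩
  set A := ∫⁻ x in T, ENNReal.ofReal (f (x - (v + τ))) with hA
  set B := ∫⁻ x in T, ENNReal.ofReal (f (x - (v' + τ))) with hB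
  have hAfin := hfin (v + τ)
  have hBfin := hfin (v' + τ)
  have haPos : 0 < A.toReal := ENNReal.toReal_pos (hpos _).ne' hAfin
  have hbPos : 0 < B.toReal := ENNReal.toReal_pos (hpos _).ne' hBfin
  have h1' : A.toReal ≤ Real.exp ε * B.toReal := by
    have := ENNReal.toReal_mono (by finiteness) h1
    rwa [ENNReal.toReal_mul, ENNReal.toReal_ofReal (exp_pos ε).le] at this
  have h2' : B.toReal ≤ Real.exp ε * A.toReal := by
    have := ENNReal.toReal_mono (by finiteness) h2
    rwa [ENNReal.toReal_mul, ENNReal.toReal_ofReal (exp_pos ε).le] at this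
  constructor
  · rw [Real.exp_neg, le_div_iff₀ hbPos, inv_mul_le_iff₀ (exp_pos ε)]
    · exact h2'
  · rw [div_le_iff₀ hbPos]
    exact h1'
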